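/- Let E be a weakly connected digraph on Fin N. Then the underlying ℝ-submodule of the Lie subalgebra of Matrix (Fin N) (Fin N) ℝ generated by {A i j | E i j} equals the ℝ-linear span of the matrices associated to the transitive closure of E: (LieSubalgebra.lieSpan ℝ (Matrix (Fin N) (Fin N) ℝ) {M | ∃ i j, E i j ∧ M = A i j}).toSubmodule = Submodule.span ℝ {M | ∃ i j, Relation.TransGen E i j ∧ M = A i j}. -/

import Mathlib

/-- The negative of the Laplacian of the single-edge digraph `i → j`. -/
def edgeMatrix {N : ℕ} (i j : Fin N) : Matrix (Fin N) (Fin N) ℝ :=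
  Matrix.single i j 1 - Matrix.single i i 1

attribute [local instance] LieRing.ofAssociativeRing

lemma std_mul {N : ℕ} (i j k l : Fin N) :
    Matrix.single i j (1:ℝ) * Matrix.single k l 1 =
      if j = k then Matrix.single i l 1 else 0 := by
  split_ifs with h
  · subst h; simp [Matrix.single_mul_single_same]
  · simp [Matrix.single_mul_single_of_ne, h]

lemma edgeMatrix_bracket {N : ℕ} (i j k l : Fin N) :
    ⁅edgeMatrix i j, edgeMatrix k l⁆ =
      (if j = k then edgeMatrix i l - edgeMatrix i j else 0)
      + (if l = i then edgeMatrix k i - edgeMatrix k j else 0)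
      + (if i = k then edgeMatrix i j - edgeMatrix i l else 0) := by
  simp only [Ring.lie_def, edgeMatrix, sub_mul, mul_sub, std_mul]
  split_ifs <;> subst_vars <;> first | (exact absurd rfl (by assumption)) | abel

theorem lieSpan_eq_span_transClosure {N : ℕ} (E : Fin N → Fin N → Prop)
    (hwc : ∀ i j : Fin N, Relation.ReflTransGen (fun a b => E a b ∨ E b a) i j) :
    (LieSubalgebra.lieSpan ℝ (Matrix (Fin N) (Fin N) ℝ)
        {M | ∃ i j, E i j ∧ M = edgeMatrix i j}).toSubmodule =
      Submodule.span ℝ {M | ∃ i j, Relation.TransGen E i j ∧ M = edgeMatrix i j} := by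
  set S : Set (Matrix (Fin N) (Fin N) ℝ) :=
    {M | ∃ i j, Relation.TransGen E i j ∧ M = edgeMatrix i j} with hS
  have hmemS : ∀ {i j : Fin N}, Relation.TransGen E i j →
      edgeMatrix i j ∈ Submodule.span ℝ S :=
    fun h => Submodule.subset_span ⟨_, _, h, rfl⟩
  have key : ∀ x ∈ Submodule.span ℝ S, ∀ y ∈ Submodule.span ℝ S,
      ⁅x, y⁆ ∈ Submodule.span ℝ S := by
    intro x hx y hy
    induction hx, hy using Submodule.span_induction₂ with
    | mem_mem x y hx hy =>
      obtain ⟨i, j, hij, rfl⟩ := hx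
      obtain ⟨k, l, hkl, rfl⟩ := hy
      rw [edgeMatrix_bracket]
      refine add_mem (add_mem ?_ ?_) ?_
      · split_ifs with h
        · subst h
          exact sub_mem (hmemS (hij.trans hkl)) (hmemS hij)
        · exact zero_mem _
      · split_ifs with h
        · subst h
          exact sub_mem (hmemS hkl) (hmemS (hkl.trans hij))
        · exact zero_mem _
      · split_ifs with h
        · subst h
          exact sub_mem (hmemS hij) (hmemS hkl)
        · exact zero_mem _
    | zero_left y hy => simp
    | zero_right x hx => simp
    | add_left x y z hx hy hz h1 h2 => rw [add_lie]; exact add_mem h1 h2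
    | add_right x y z hx hy hz h1 h2 => rw [lie_add]; exact add_mem h1 h2
    | smul_left r x y hx hy h => rw [smul_lie]; exact Submodule.smul_mem _ _ h
    | smul_right r x y hx hy h => rw [lie_smul]; exact Submodule.smul_mem _ _ h
  set L : LieSubalgebra ℝ (Matrix (Fin N) (Fin N) ℝ) :=
    { Submodule.span ℝ S with
      lie_mem' := fun {x y} hx hy => key x hx y hy } with hL
  apply le_antisymm
  · have h1 : LieSubalgebra.lieSpan ℝ (Matrix (Fin N) (Fin N) ℝ)
        {M | ∃ i j, E i j ∧ M = edgeMatrix i j} ≤ L := by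
      rw [LieSubalgebra.lieSpan_le]
      rintro M ⟨i, j, hij, rfl⟩
      exact hmemS (Relation.TransGen.single hij)
    exact h1
  · rw [Submodule.span_le]
    rintro M ⟨i, j, hij, rfl⟩
    show edgeMatrix i j ∈ LieSubalgebra.lieSpan ℝ _ _
    induction hij with
    | single h => exact LieSubalgebra.subset_lieSpan ⟨_, _, h, rfl⟩
    | tail hab hbc ih =>
      rename_i b c
      have hbcmem : edgeMatrix b c ∈ LieSubalgebra.lieSpan ℝ (Matrix (Fin N) (Fin N) ℝ)
          {M | ∃ i j, E i j ∧ M = edgeMatrix i j} :=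
        LieSubalgebra.subset_lieSpan ⟨_, _, hbc, rfl⟩
      by_cases hib : i = b
      · subst hib; exact hbcmem
      by_cases hci : c = i
      · rw [hci, show edgeMatrix i i = 0 by simp [edgeMatrix]]
        exact zero_mem _
      · have hb : ⁅edgeMatrix i b, edgeMatrix b c⁆ = edgeMatrix i c - edgeMatrix i b := by
          rw [edgeMatrix_bracket]
          simp [hci, hib]
        have : edgeMatrix i c = ⁅edgeMatrix i b, edgeMatrix b c⁆ + edgeMatrix i b := by
          rw [hb]; abel
        rw [this]
        exact add_mem (LieSubalgebra.lie_mem _ ih hbcmem) ih
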